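/- Let φ : A ⥤ B, ψ : C ⥤ B, and ℓ : A ⥤ C be functors between categories, and let λ : φ ⟶ ℓ ⋙ ψ be a natural transformation. Then (ℓ, λ) is an absolute left lifting diagram — meaning that for every category Z and all functors p : Z ⥤ A, q : Z ⥤ C, the map sending a natural transformation μ : p ⋙ ℓ ⟶ q to the composite natural transformation (λ whiskered with p) followed by (ψ whiskered with μ) : p ⋙ φ ⟶ q ⋙ ψ is a bijection — if and only if for every object a of A, the pair (ℓ(a), λ_a) is an initial object of the comma category of arrows from φ(a) to ψ (the structured-arrow category StructuredArrow (φ a) ψ). -/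

import Mathlib

universe v₁ u₁ v₂ u₂ v₃ u₃ v₄ u₄

open CategoryTheory

/-- `(ℓ, lam)` is an absolute left lifting diagram of `φ` through `ψ` if for all functors
`p : Z ⥤ A` and `q : Z ⥤ C`, pasting with `lam` gives a bijection from natural
transformations `p ⋙ ℓ ⟶ q` to natural transformations `p ⋙ φ ⟶ q ⋙ ψ`. -/
def IsAbsoluteLeftLifting {A : Type u₁} [Category.{v₁} A] {B : Type u₂} [Category.{v₂} B]
    {C : Type u₃} [Category.{v₃} C] (φ : A ⥤ B) (ψ : C ⥤ B) (ℓ : A ⥤ C)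
    (lam : φ ⟶ ℓ ⋙ ψ) : Prop :=
  ∀ {Z : Type u₄} [Category.{v₄} Z] (p : Z ⥤ A) (q : Z ⥤ C),
    Function.Bijective
      (fun μ : p ⋙ ℓ ⟶ q => (Functor.whiskerLeft p lam ≫ Functor.whiskerRight μ ψ :
        p ⋙ φ ⟶ q ⋙ ψ))

/-- A one-object, one-morphism category in an arbitrary universe pair. -/
def AbsLiftPt : Type u₄ := PUnit

instance : Category.{v₄} AbsLiftPt.{u₄} where
  Hom _ _ := PUnit
  id _ := ⟨⟩
  comp _ _ := ⟨⟩

/-- The unique object of `AbsLiftPt`. -/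
def AbsLiftPt.pt : AbsLiftPt.{u₄} := PUnit.unit

/-- `(ℓ, lam)` is an absolute left lifting diagram if and only if, for every object `a` of
`A`, the pair `(ℓ a, lam.app a)` is an initial object of the comma category
`StructuredArrow (φ a) ψ`. -/
theorem isAbsoluteLeftLifting_iff_pointwise_initial
    {A : Type u₁} [Category.{v₁} A] {B : Type u₂} [Category.{v₂} B]
    {C : Type u₃} [Category.{v₃} C] (φ : A ⥤ B) (ψ : C ⥤ B) (ℓ : A ⥤ C)
    (lam : φ ⟶ ℓ ⋙ ψ) :
    IsAbsoluteLeftLifting.{v₁, u₁, v₂, u₂, v₃, u₃, v₄, u₄} φ ψ ℓ lam ↔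
      ∀ a : A, Nonempty (Limits.IsInitial
        (StructuredArrow.mk (lam.app a) : StructuredArrow (φ.obj a) ψ)) := by
  constructor
  · intro h a
    set P : AbsLiftPt.{u₄} ⥤ A := (Functor.const _).obj a with hP
    have ex : ∀ (f : StructuredArrow (φ.obj a) ψ),
        ∃ g : ℓ.obj a ⟶ f.right, lam.app a ≫ ψ.map g = f.hom := by
      intro f
      obtain ⟨μ, hμ⟩ := (h P ((Functor.const _).obj f.right)).2
        { app := fun _ => f.hom
          naturality := by intros; simp [P] }
      refine ⟨μ.app AbsLiftPt.pt, ?_⟩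
      simpa [P] using NatTrans.congr_app hμ AbsLiftPt.pt
    have uniq : ∀ (f : StructuredArrow (φ.obj a) ψ) (g g' : ℓ.obj a ⟶ f.right),
        lam.app a ≫ ψ.map g = f.hom → lam.app a ≫ ψ.map g' = f.hom → g = g' := by
      intro f g g' hg hg'
      have := (h P ((Functor.const _).obj f.right)).1
        (a₁ := { app := fun _ => g, naturality := by intros; simp [P] })
        (a₂ := { app := fun _ => g', naturality := by intros; simp [P] }) ?_
      · exact NatTrans.congr_app this ⟨⟩
      · ext x
        simpa [P] using hg.trans hg'.symm
    exact ⟨Limits.IsInitial.ofUniqueHom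
      (fun f => StructuredArrow.homMk (ex f).choose (ex f).choose_spec)
      (fun f m => by
        ext
        exact uniq f m.right _ (StructuredArrow.w m) (ex f).choose_spec)⟩
  · intro h Z _ p q
    have hw : ∀ (x : A) (c : C) (f : φ.obj x ⟶ ψ.obj c)
        (m : (StructuredArrow.mk (lam.app x) : StructuredArrow (φ.obj x) ψ) ⟶
          StructuredArrow.mk f), lam.app x ≫ ψ.map m.right = f := by
      intro x c f m
      simpa using StructuredArrow.w m
    constructor
    · intro μ μ' hμμ'
      ext z
      have key : ∀ ν : p ⋙ ℓ ⟶ q,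
          lam.app (p.obj z) ≫ ψ.map (ν.app z)
            = ((fun μ : p ⋙ ℓ ⟶ q => (Functor.whiskerLeft p lam ≫ Functor.whiskerRight μ ψ :
                p ⋙ φ ⟶ q ⋙ ψ)) ν).app z := fun ν => by simp
      have e1 := key μ
      have e2 := (key μ').trans (NatTrans.congr_app hμμ'.symm z)
      have := (h (p.obj z)).some.hom_ext
        (StructuredArrow.homMk (μ.app z) e1 :
          (StructuredArrow.mk (lam.app (p.obj z)) : StructuredArrow (φ.obj (p.obj z)) ψ) ⟶
            StructuredArrow.mk (((fun μ : p ⋙ ℓ ⟶ q => (Functor.whiskerLeft p lam ≫ Functor.whiskerRight μ ψ :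
                p ⋙ φ ⟶ q ⋙ ψ)) μ).app z : φ.obj (p.obj z) ⟶ ψ.obj (q.obj z)))
        (StructuredArrow.homMk (μ'.app z) e2)
      exact congrArg CommaMorphism.right this
    · intro τ
      have t : ∀ z : Z, (StructuredArrow.mk (lam.app (p.obj z)) :
          StructuredArrow (φ.obj (p.obj z)) ψ) ⟶
            StructuredArrow.mk (τ.app z : φ.obj (p.obj z) ⟶ ψ.obj (q.obj z)) :=
        fun z => (h (p.obj z)).some.to _
      refine ⟨{ app := fun z => (t z).right, naturality := ?_ }, ?_⟩
      · intro z z' u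
        have w1 : lam.app (p.obj z) ≫ ψ.map (ℓ.map (p.map u) ≫ (t z').right)
            = φ.map (p.map u) ≫ τ.app z' := by
          have hn := lam.naturality (p.map u)
          simp only [Functor.comp_map] at hn
          rw [ψ.map_comp, ← Category.assoc, ← hn, Category.assoc, hw _ _ _ (t z')]
        have w2 : lam.app (p.obj z) ≫ ψ.map ((t z).right ≫ q.map u)
            = φ.map (p.map u) ≫ τ.app z' := by
          rw [ψ.map_comp, ← Category.assoc, hw _ _ _ (t z)]
          simpa using (τ.naturality u).symm
        have := (h (p.obj z)).some.hom_ext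
          (StructuredArrow.homMk (ℓ.map (p.map u) ≫ (t z').right) w1 :
            (StructuredArrow.mk (lam.app (p.obj z)) : StructuredArrow (φ.obj (p.obj z)) ψ) ⟶
              StructuredArrow.mk (φ.map (p.map u) ≫ τ.app z' :
                φ.obj (p.obj z) ⟶ ψ.obj (q.obj z')))
          (StructuredArrow.homMk ((t z).right ≫ q.map u) w2)
        exact congrArg CommaMorphism.right this
      · ext z
        simpa using hw _ _ _ (t z)
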